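/- Let G be a countable group and K a finite symmetric subset containing the identity such that the subgroup ⟨K⟩ satisfies |B_{4n}(K)| ≤ C₀² |B_n(K)| for all n ≥ 1 (e.g., via the doubling property with constant C₀). Fix m₀ ≥ C₀² and n₀ ∈ ℕ. If 𝒞 ⊂ G is such that the sets {cK^{n₀}}_{c∈𝒞} are pairwise disjoint, then for every n ∈ [0, n₀] and every g ∈ G, the number of c ∈ 𝒞 with dist_K(g, cK^{2n₀}) ≤ n is at most m₀. -/

import Mathlib

open scoped Pointwise

/-- The translated tile `c K^m`, as a set: `g ∈ tile K c m ↔ ρ_K(c,g) ≤ m`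
(for `K` finite symmetric containing the identity). -/
def tile {G : Type*} [Group G] [DecidableEq G] (K : Finset G) (c : G) (m : ℕ) : Set G :=
  {x : G | c⁻¹ * x ∈ K ^ m}

/-- The set of centers `c ∈ 𝒞` whose expanded tile `c K^{2n₀}` lies within word-metric
distance `n` of `g`, i.e. `dist_K(g, c K^{2n₀}) ≤ n`. -/
def degSet {G : Type*} [Group G] [DecidableEq G] (K : Finset G) (C : Set G)
    (n₀ n : ℕ) (g : G) : Set G :=
  {c ∈ C | ∃ s ∈ tile K c (2 * n₀), g⁻¹ * s ∈ K ^ n}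

lemma mem_smul_pow_iff {G : Type*} [Group G] [DecidableEq G] (K : Finset G) (c x : G) (m : ℕ) :
    x ∈ c • (K ^ m) ↔ c⁻¹ * x ∈ K ^ m := by
  constructor
  · rintro hx
    obtain ⟨y, hy, rfl⟩ := Finset.mem_smul_finset.1 hx
    simpa [smul_eq_mul] using hy
  · intro hx
    exact Finset.mem_smul_finset.2 ⟨c⁻¹ * x, hx, by simp [smul_eq_mul]⟩

/-- Bounded degree lemma: if `|B_{4n}(K)| ≤ C₀² |B_n(K)|` for all `n ≥ 1`, `m₀ ≥ C₀²`,
and the tiles `{c K^{n₀}}_{c ∈ 𝒞}` are pairwise disjoint, then for every `n ∈ [0, n₀]`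
and every `g`, at most `m₀` centers `c ∈ 𝒞` satisfy `dist_K(g, c K^{2n₀}) ≤ n`. -/
theorem bounded_degree {G : Type*} [Group G] [DecidableEq G]
    (K : Finset G) (h1 : (1 : G) ∈ K) (hsym : K⁻¹ = K)
    (C₀ : ℝ)
    (hC₀ : ∀ n : ℕ, 1 ≤ n →
      (((K ^ (4 * n) : Finset G)).card : ℝ) ≤ C₀ ^ 2 * (((K ^ n : Finset G)).card : ℝ))
    (m₀ n₀ : ℕ) (hm₀ : C₀ ^ 2 ≤ (m₀ : ℝ)) (hn₀ : 1 ≤ n₀)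
    (C : Set G)
    (hdisj : C.Pairwise fun c c' => Disjoint (tile K c n₀) (tile K c' n₀)) :
    ∀ n : ℕ, n ≤ n₀ → ∀ g : G, (degSet K C n₀ n g).encard ≤ (m₀ : ℕ∞) := by
  intro n hn g
  by_contra hcon
  push_neg at hcon
  obtain ⟨t, hts, htc⟩ := Set.exists_subset_encard_eq (Order.add_one_le_of_lt hcon)
  have htc' : t.encard = ((m₀ + 1 : ℕ) : ℕ∞) := by rw [htc]; push_cast; ring
  have hfin : t.Finite := Set.finite_of_encard_eq_coe htc'
  set T : Finset G := hfin.toFinset with hT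
  have hTcard : T.card = m₀ + 1 := by
    have := hfin.encard_eq_coe_toFinset_card
    rw [htc'] at this
    exact_mod_cast this.symm
  -- each tile c • K^{n₀} is inside g • K^{4n₀}
  have hsub : ∀ c ∈ T, c • (K ^ n₀) ⊆ g • (K ^ (4 * n₀)) := by
    intro c hc x hx
    have hcdeg : c ∈ degSet K C n₀ n g := hts (hfin.mem_toFinset.1 hc)
    obtain ⟨-, s, hs1, hs2⟩ := hcdeg
    rw [mem_smul_pow_iff] at hx
    rw [mem_smul_pow_iff]
    -- g⁻¹ * x = (g⁻¹ s) * (s⁻¹ c) * (c⁻¹ x)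
    have h1' : g⁻¹ * s ∈ K ^ n₀ := Finset.pow_subset_pow_right h1 hn hs2
    have h2' : s⁻¹ * c ∈ K ^ (2 * n₀) := by
      have : (c⁻¹ * s)⁻¹ ∈ (K ^ (2 * n₀))⁻¹ := Finset.inv_mem_inv hs1
      rwa [mul_inv_rev, inv_inv, ← inv_pow, hsym] at this
    have : (g⁻¹ * s) * ((s⁻¹ * c) * (c⁻¹ * x)) ∈ K ^ n₀ * (K ^ (2 * n₀) * K ^ n₀) :=
      Finset.mul_mem_mul h1' (Finset.mul_mem_mul h2' hx)
    have heq : (g⁻¹ * s) * ((s⁻¹ * c) * (c⁻¹ * x)) = g⁻¹ * x := by group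
    have hpow : (K ^ n₀) * (K ^ (2 * n₀) * K ^ n₀) = K ^ (4 * n₀) := by
      rw [← pow_add, ← pow_add]; ring_nf
    rwa [heq, hpow] at this
  -- the tiles are pairwise disjoint
  have hdisjT : ∀ c ∈ T, ∀ c' ∈ T, c ≠ c' → Disjoint (c • (K ^ n₀)) (c' • (K ^ n₀)) := by
    intro c hc c' hc' hne
    have hcC : c ∈ C := (hts (hfin.mem_toFinset.1 hc)).1
    have hc'C : c' ∈ C := (hts (hfin.mem_toFinset.1 hc')).1
    have := hdisj hcC hc'C hne
    rw [Finset.disjoint_left]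
    intro a ha ha'
    rw [mem_smul_pow_iff] at ha ha'
    exact Set.disjoint_left.1 this ha ha'
  -- cardinality count
  have hbiU : (T.biUnion fun c => c • (K ^ n₀)).card = (m₀ + 1) * (K ^ n₀).card := by
    rw [Finset.card_biUnion hdisjT]
    simp [Finset.card_smul_finset, hTcard, Finset.sum_const]
  have hsub' : (T.biUnion fun c => c • (K ^ n₀)) ⊆ g • (K ^ (4 * n₀)) :=
    Finset.biUnion_subset.2 hsub
  have hle : (m₀ + 1) * (K ^ n₀).card ≤ (K ^ (4 * n₀)).card := by
    rw [← hbiU]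
    calc (T.biUnion fun c => c • (K ^ n₀)).card ≤ (g • (K ^ (4 * n₀))).card :=
          Finset.card_le_card hsub'
      _ = (K ^ (4 * n₀)).card := Finset.card_smul_finset g _
  have hKpos : 1 ≤ (K ^ n₀).card := Finset.card_pos.2 ⟨1, Finset.one_mem_pow h1⟩
  have hreal : ((m₀ + 1 : ℕ) : ℝ) * ((K ^ n₀).card : ℝ) ≤ (m₀ : ℝ) * ((K ^ n₀).card : ℝ) := by
    calc ((m₀ + 1 : ℕ) : ℝ) * ((K ^ n₀).card : ℝ) ≤ ((K ^ (4 * n₀)).card : ℝ) := by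
          exact_mod_cast hle
      _ ≤ C₀ ^ 2 * ((K ^ n₀).card : ℝ) := hC₀ n₀ hn₀
      _ ≤ (m₀ : ℝ) * ((K ^ n₀).card : ℝ) := by
          apply mul_le_mul_of_nonneg_right hm₀ (by positivity)
  have hKpos' : (0 : ℝ) < ((K ^ n₀).card : ℝ) := by exact_mod_cast hKpos
  have := (mul_le_mul_iff_of_pos_right hKpos').1 hreal
  push_cast at this
  linarith
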